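/- Assume MM-1, MM-2, A1 and A2. Then for every s ∈ S such that T(s) lies in the interior of Θ, the vector −(Dφ(T(s)))* h(s) belongs to ∇f(T(s)) + ∂g(T(s)); here (Dφ(θ))* v denotes the gradient at θ of the map θ' ↦ ⟨v, φ(θ')⟩ (i.e. the transposed Jacobian of φ at θ applied to v ∈ ℝ^q), and ∂g denotes the convex subdifferential of g. -/

import Mathlib

open MeasureTheory Set
open scoped RealInnerProductSpace Pointwise

/-- The convex subdifferential of an extended-real-valued function. -/
def subdiff {E : Type*} [NormedAddCommGroup E] [InnerProductSpace ℝ E]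
    (g : E → EReal) (x : E) : Set E :=
  {u | ∀ y, g x + ((⟪u, y - x⟫ : ℝ) : EReal) ≤ g y}

/-- Assume MM-1, MM-2, A1 and A2. For every `s ∈ S` with `T s` in the
interior of `Θ`, the vector `−(Dφ(T s))* h(s)` belongs to `∇f(T s) + ∂g(T s)`, where
`h(s) := E_π[S̄(Z, T s)] − s` is the mean field and `(Dφ(θ))* v` is the gradient at `θ`
of `θ' ↦ ⟨v, φ(θ')⟩`. -/
theorem mean_field_gives_subgradient
    {d q p : ℕ}
    (Θ : Set (EuclideanSpace ℝ (Fin d)))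
    (Sset : Set (EuclideanSpace ℝ (Fin q)))
    (g : EuclideanSpace ℝ (Fin d) → EReal)
    (ψ : EuclideanSpace ℝ (Fin d) → ℝ)
    (φ : EuclideanSpace ℝ (Fin d) → EuclideanSpace ℝ (Fin q))
    (π : Measure (EuclideanSpace ℝ (Fin p))) [IsProbabilityMeasure π]
    (ℓ : EuclideanSpace ℝ (Fin p) → EuclideanSpace ℝ (Fin d) → ℝ)
    (f : EuclideanSpace ℝ (Fin d) → ℝ)
    (barS : EuclideanSpace ℝ (Fin p) → EuclideanSpace ℝ (Fin d) → EuclideanSpace ℝ (Fin q))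
    (T : EuclideanSpace ℝ (Fin q) → EuclideanSpace ℝ (Fin d))
    -- g is proper (never −∞, finite somewhere), lower semicontinuous, convex, with domain Θ
    (hg_ne_bot : ∀ x, g x ≠ ⊥)
    (hg_proper : ∃ x, g x ≠ ⊤)
    (hg_lsc : LowerSemicontinuous g)
    (hg_convex : ∀ x y : EuclideanSpace ℝ (Fin d), ∀ a b : ℝ, 0 ≤ a → 0 ≤ b → a + b = 1 →
      g (a • x + b • y) ≤ (a : EReal) * g x + (b : EReal) * g y)
    (hΘ : Θ = {x | g x ≠ ⊤})
    -- S is a convex subset of ℝ^q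
    (hS_convex : Convex ℝ Sset)
    -- the objective f(θ) = E_π[ℓ(Z,θ)], with ℓ measurable and π-integrable
    (hℓ_meas : Measurable (Function.uncurry ℓ))
    (hℓ_int : ∀ θ ∈ Θ, Integrable (fun z => ℓ z θ) π)
    (hf : ∀ θ, f θ = ∫ z, ℓ z θ ∂π)
    -- MM-1: S̄ is measurable, S-valued and integrable, with mean in S, and the surrogate
    -- majorizes f tangentially
    (hbarS_meas : Measurable (Function.uncurry barS))
    (hbarS_mem : ∀ z, ∀ τ ∈ Θ, barS z τ ∈ Sset)
    (hbarS_int : ∀ τ ∈ Θ, Integrable (fun z => barS z τ) π)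
    (hmean_mem : ∀ τ ∈ Θ, (∫ z, barS z τ ∂π) ∈ Sset)
    (hMM1 : ∀ τ ∈ Θ, ∀ θ ∈ Θ,
      f θ ≤ f τ + ψ θ - ψ τ - ⟪∫ z, barS z τ ∂π, φ θ - φ τ⟫)
    -- MM-2: T s is the unique minimizer over ℝ^d of θ ↦ g(θ) + ψ(θ) − ⟨s, φ(θ)⟩,
    -- T maps S into Θ and is measurable
    (hT_mem : ∀ s ∈ Sset, T s ∈ Θ)
    (hT_min : ∀ s ∈ Sset, ∀ θ : EuclideanSpace ℝ (Fin d),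
      g (T s) + ((ψ (T s) - ⟪s, φ (T s)⟫ : ℝ) : EReal)
        ≤ g θ + ((ψ θ - ⟪s, φ θ⟫ : ℝ) : EReal))
    (hT_unique : ∀ s ∈ Sset, ∀ θ₀ : EuclideanSpace ℝ (Fin d),
      (∀ θ : EuclideanSpace ℝ (Fin d),
        g θ₀ + ((ψ θ₀ - ⟪s, φ θ₀⟫ : ℝ) : EReal)
          ≤ g θ + ((ψ θ - ⟪s, φ θ⟫ : ℝ) : EReal)) → θ₀ = T s)
    (hT_meas : Measurable T)
    -- A1: convexity of the smooth part of the surrogate; regularity of ψ, φ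
    (hA1_convex : ∀ s ∈ Sset, ConvexOn ℝ Set.univ (fun θ => ψ θ - ⟪s, φ θ⟫))
    (hint_ne : (interior Θ).Nonempty)
    (hψ_C1 : ContDiffOn ℝ 1 ψ (interior Θ))
    (hφ_C1 : ContDiffOn ℝ 1 φ (interior Θ))
    -- A2: f is C¹ on the interior of Θ
    (hf_C1 : ContDiffOn ℝ 1 f (interior Θ)) :
    ∀ s ∈ Sset, T s ∈ interior Θ →
      -(gradient (fun θ' => ⟪(∫ z, barS z (T s) ∂π) - s, φ θ'⟫) (T s))
        ∈ gradient f (T s) +ᵥ subdiff g (T s) := by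
  intro s hs hint
  set x := T s with hxdef
  set m : EuclideanSpace ℝ (Fin q) := ∫ z, barS z x ∂π with hmdef
  have hxΘ : x ∈ Θ := hT_mem s hs
  -- differentiability
  have hψd : DifferentiableAt ℝ ψ x :=
    (hψ_C1.contDiffAt (isOpen_interior.mem_nhds hint)).differentiableAt one_ne_zero
  have hφd : DifferentiableAt ℝ φ x :=
    (hφ_C1.contDiffAt (isOpen_interior.mem_nhds hint)).differentiableAt one_ne_zero
  have hfd : DifferentiableAt ℝ f x :=
    (hf_C1.contDiffAt (isOpen_interior.mem_nhds hint)).differentiableAt one_ne_zero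
  have hmd : DifferentiableAt ℝ (fun θ => ⟪m, φ θ⟫) x :=
    (differentiableAt_const m).inner ℝ hφd
  have hsd : DifferentiableAt ℝ (fun θ => ⟪s, φ θ⟫) x :=
    (differentiableAt_const s).inner ℝ hφd
  set a := gradient ψ x with hadef
  set b := gradient (fun θ => ⟪m, φ θ⟫) x with hbdef
  set c := gradient (fun θ => ⟪s, φ θ⟫) x with hcdef
  have ha : HasGradientAt ψ a x := hψd.hasGradientAt
  have hb : HasGradientAt (fun θ => ⟪m, φ θ⟫) b x := hmd.hasGradientAt
  have hc : HasGradientAt (fun θ => ⟪s, φ θ⟫) c x := hsd.hasGradientAt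
  -- gradient of f equals a - b by first-order optimality in MM-1
  have hmin : IsLocalMin (fun θ => ψ θ - ⟪m, φ θ⟫ - f θ) x := by
    refine Filter.eventually_of_mem (isOpen_interior.mem_nhds hint) ?_
    intro θ hθ
    have h1 := hMM1 x hxΘ θ (interior_subset hθ)
    rw [inner_sub_right] at h1
    simp only
    linarith
  have hGder : HasFDerivAt (fun θ => ψ θ - ⟪m, φ θ⟫ - f θ)
      (InnerProductSpace.toDual ℝ _ (a - b - gradient f x)) x := by
    rw [map_sub, map_sub]
    exact (ha.hasFDerivAt.sub hb.hasFDerivAt).sub hfd.hasGradientAt.hasFDerivAt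
  have hzero : a - b - gradient f x = 0 := by
    have h0 := hmin.hasFDerivAt_eq_zero hGder
    exact (InnerProductSpace.toDual ℝ (EuclideanSpace ℝ (Fin d))).injective
      (by rw [map_zero]; exact h0)
  have hGf : gradient f x = a - b := by
    have := sub_eq_zero.mp hzero
    linear_combination (norm := abel) -this
  -- the gradient appearing in the statement
  have hGm : gradient (fun θ' => ⟪m - s, φ θ'⟫) x = b - c := by
    have hbc : HasGradientAt (fun θ => ⟪m - s, φ θ⟫) (b - c) x := by
      rw [hasGradientAt_iff_hasFDerivAt, map_sub]
      have := hb.hasFDerivAt.sub hc.hasFDerivAt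
      simpa only [inner_sub_left, Pi.sub_def] using this
    exact hbc.gradient
  rw [hGm, hGf]
  refine Set.mem_vadd_set.mpr ⟨c - a, ?_, by rw [vadd_eq_add]; abel⟩
  -- subgradient inequality
  intro y
  set F : EuclideanSpace ℝ (Fin d) → ℝ := fun θ => ψ θ - ⟪s, φ θ⟫ with hFdef
  have hFg : HasGradientAt F (a - c) x := by
    rw [hasGradientAt_iff_hasFDerivAt, map_sub]
    exact ha.hasFDerivAt.sub hc.hasFDerivAt
  -- the one-variable function along the segment from x to y
  set k : ℝ → ℝ := fun t => F (x + t • (y - x)) with hkdef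
  have hline : HasDerivAt (fun t : ℝ => x + t • (y - x)) (y - x) 0 := by
    have h1 : HasDerivAt (fun t : ℝ => t • (y - x)) (y - x) 0 := by
      simpa using (hasDerivAt_id (0 : ℝ)).smul_const (y - x)
    exact h1.const_add x
  have hk : HasDerivAt k ⟪a - c, y - x⟫ 0 := by
    have hF' : HasFDerivAt F (InnerProductSpace.toDual ℝ _ (a - c))
        ((fun t : ℝ => x + t • (y - x)) 0) := by
      simpa using hFg.hasFDerivAt
    have := HasFDerivAt.comp_hasDerivAt (hl := hF') (hf := hline)
    simpa only [Function.comp_def, InnerProductSpace.toDual_apply_apply] using this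
  -- g x is real
  have hgx_ne_top : g x ≠ ⊤ := by rw [hΘ] at hxΘ; exact hxΘ
  set gx : ℝ := (g x).toReal with hgxdef
  have hgx : g x = (gx : EReal) := (EReal.coe_toReal hgx_ne_top (hg_ne_bot x)).symm
  by_cases hgy_top : g y = ⊤
  · rw [hgy_top]; exact le_top
  set gy : ℝ := (g y).toReal with hgydef
  have hgy : g y = (gy : EReal) := (EReal.coe_toReal hgy_top (hg_ne_bot y)).symm
  -- key slope bound for t ∈ (0,1]
  have hslope : ∀ t : ℝ, t ∈ Set.Ioc (0:ℝ) 1 → gx - gy ≤ slope k 0 t := by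
    intro t ht
    obtain ⟨ht0, ht1⟩ := ht
    set xt := x + t • (y - x) with hxtdef
    have hxt_eq : xt = (1 - t) • x + t • y := by
      rw [hxtdef, smul_sub, sub_smul, one_smul]; abel
    -- g xt bound from convexity of g
    have hcx : g xt ≤ ((1 - t) * gx + t * gy : ℝ) := by
      have := hg_convex x y (1 - t) t (by linarith) ht0.le (by ring)
      rw [← hxt_eq] at this
      calc g xt ≤ ((1 - t : ℝ) : EReal) * g x + ((t : ℝ) : EReal) * g y := this
        _ = (((1 - t) * gx + t * gy : ℝ) : EReal) := by
            rw [hgx, hgy, ← EReal.coe_mul, ← EReal.coe_mul, ← EReal.coe_add]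
    have hxt_ne_top : g xt ≠ ⊤ := by
      intro h; rw [h] at hcx; exact (EReal.coe_lt_top _).not_ge hcx
    set gt : ℝ := (g xt).toReal with hgtdef
    have hgt : g xt = (gt : EReal) := (EReal.coe_toReal hxt_ne_top (hg_ne_bot xt)).symm
    have hgt_le : gt ≤ (1 - t) * gx + t * gy := by
      rw [hgt] at hcx; exact_mod_cast hcx
    -- optimality of x
    have hopt := hT_min s hs xt
    rw [hgx, hgt, ← EReal.coe_add, ← EReal.coe_add] at hopt
    have hopt' : gx + (ψ x - ⟪s, φ x⟫) ≤ gt + (ψ xt - ⟪s, φ xt⟫) := by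
      exact_mod_cast hopt
    -- combine
    have hkey : (gx - gy) * t ≤ k t - k 0 := by
      have hk0 : k 0 = F x := by simp [hkdef]
      have hkt : k t = F xt := by rw [hkdef]
      rw [hk0, hkt, hFdef]
      simp only
      nlinarith [hopt', hgt_le]
    rw [slope_def_field, sub_zero, le_div_iff₀ ht0]
    linarith
  -- pass to the limit t → 0+
  have hlim : gx - gy ≤ ⟪a - c, y - x⟫ := by
    have htend : Filter.Tendsto (slope k 0) (nhdsWithin 0 (Set.Ioi 0))
        (nhds ⟪a - c, y - x⟫) :=
      (hasDerivAt_iff_tendsto_slope.mp hk).mono_left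
        (nhdsWithin_mono _ (fun t ht => ne_of_gt ht))
    refine ge_of_tendsto htend ?_
    filter_upwards [Ioc_mem_nhdsGT_of_mem (Set.left_mem_Ico.mpr one_pos)] with t ht
      using hslope t ht
  rw [hgx, hgy, ← EReal.coe_add, EReal.coe_le_coe_iff]
  have hflip : ⟪c - a, y - x⟫ = -⟪a - c, y - x⟫ := by
    rw [← neg_sub a c, inner_neg_left]
  linarith
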